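/- arXiv:1808.05251 — 4 statements merged into one kernel-verified Lean document; each statement's English description precedes it below -/
import Mathlib

section
/- A reverse standard Young tableau S of shape τ is uniquely determined by its content vector (c(1,S), …, c(N,S)), where c(i,S) = col(i,S) - row(i,S): if two RSYT of the same shape τ have equal content vectors, they are equal. -/
/-- `S` is a reverse standard Young tableau of the shape `τ` (rows/columns 0-indexed),
recorded as the map sending each entry `i ∈ {1,…,N}` to its cell `(row, col)`:
entries strictly decrease along each row and down each column. -/
def IsRSYT (τ : ℕ → ℕ) (N : ℕ) (S : ℕ → ℕ × ℕ) : Prop :=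
  Set.BijOn S (Set.Icc 1 N) {p : ℕ × ℕ | p.2 < τ p.1} ∧
  (∀ i ∈ Set.Icc 1 N, ∀ j ∈ Set.Icc 1 N,
    (S i).1 = (S j).1 → (S i).2 < (S j).2 → j < i) ∧
  (∀ i ∈ Set.Icc 1 N, ∀ j ∈ Set.Icc 1 N,
    (S i).2 = (S j).2 → (S i).1 < (S j).1 → j < i)

/-- The content of the entry `i` in the tableau `S`. -/
def content (S : ℕ → ℕ × ℕ) (i : ℕ) : ℤ := ((S i).2 : ℤ) - (S i).1

/-- In an RSYT, if the cell of `m` is weakly up-left of the cell of `k`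
(and distinct from it), then `k < m`. -/
lemma rsyt_compare {τ : ℕ → ℕ} (hτ : Antitone τ) {N : ℕ} {S : ℕ → ℕ × ℕ}
    (hS : IsRSYT τ N S) {k m : ℕ} (hk : k ∈ Set.Icc 1 N) (hm : m ∈ Set.Icc 1 N)
    (h1 : (S m).1 ≤ (S k).1) (h2 : (S m).2 ≤ (S k).2) (hne : S k ≠ S m) :
    k < m := by
  obtain ⟨hbij, hrow, hcol⟩ := hS
  have hkmem : (S k).2 < τ (S k).1 := hbij.mapsTo hk
  have hmid : ((S m).1, (S k).2) ∈ {p : ℕ × ℕ | p.2 < τ p.1} :=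
    lt_of_lt_of_le hkmem (hτ h1)
  obtain ⟨l, hl, hSl⟩ := hbij.surjOn hmid
  rcases eq_or_lt_of_le h1 with h1e | h1l
  · rcases eq_or_lt_of_le h2 with h2e | h2l
    · exact absurd (Prod.ext h1e.symm h2e.symm) hne
    · exact hrow m hm k hk h1e h2l
  · have hkl : k < l := hcol l hl k hk (by rw [hSl]) (by rw [hSl]; exact h1l)
    rcases eq_or_lt_of_le h2 with h2e | h2l
    · have hlm : l = m := hbij.injOn hl hm (by rw [hSl]; exact Prod.ext rfl h2e.symm)
      exact hlm ▸ hkl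
    · have hlm : l < m := hrow m hm l hl (by rw [hSl]) (by rw [hSl]; exact h2l)
      exact hkl.trans hlm

/-- Key step: the cell of `i` in `S` cannot be strictly above (on the same diagonal)
its cell in `S'`, given that all larger entries agree. -/
lemma rsyt_aux {τ : ℕ → ℕ} (hτ : Antitone τ) {N : ℕ} {S S' : ℕ → ℕ × ℕ}
    (hS : IsRSYT τ N S) (hS' : IsRSYT τ N S') {i : ℕ} (hi : i ∈ Set.Icc 1 N)
    (hIH : ∀ j ∈ Set.Icc 1 N, i < j → S j = S' j)
    (hci : content S i = content S' i)
    (hlt : (S i).1 < (S' i).1) : False := by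
  have hc2 : (S i).2 < (S' i).2 := by unfold content at hci; omega
  have hmem' : (S' i).2 < τ (S' i).1 := hS'.1.mapsTo hi
  have hmid : ((S' i).1, (S' i).2 - 1) ∈ {p : ℕ × ℕ | p.2 < τ p.1} := by
    simp only [Set.mem_setOf_eq]; omega
  obtain ⟨j, hj, hSj⟩ := hS'.1.surjOn hmid
  have hij : i < j :=
    hS'.2.1 j hj i hi (by rw [hSj]) (by rw [hSj]; simp only; omega)
  have hSjc : S j = ((S' i).1, (S' i).2 - 1) := by rw [hIH j hj hij, hSj]
  have : j < i := by
    refine rsyt_compare hτ hS hj hi ?_ ?_ ?_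
    · rw [hSjc]; exact hlt.le
    · rw [hSjc]; simp only; omega
    · rw [hSjc]
      intro hcontra
      have := congrArg Prod.fst hcontra
      simp only at this
      omega
  omega

/-- An RSYT is uniquely determined by its content vector. -/
theorem rsyt_determined_by_content (τ : ℕ → ℕ) (hτ : Antitone τ) (N : ℕ)
    (S S' : ℕ → ℕ × ℕ) (hS : IsRSYT τ N S) (hS' : IsRSYT τ N S')
    (hc : ∀ i ∈ Set.Icc 1 N, content S i = content S' i) :
    ∀ i ∈ Set.Icc 1 N, S i = S' i := by
  have main : ∀ d : ℕ, ∀ i ∈ Set.Icc 1 N, N = i + d → S i = S' i := by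
    intro d
    induction d using Nat.strong_induction_on with
    | _ d IH =>
      intro i hi hNi
      have hIH : ∀ j ∈ Set.Icc 1 N, i < j → S j = S' j := by
        intro j hj hij
        obtain ⟨hj1, hj2⟩ := hj
        exact IH (N - j) (by omega) j ⟨hj1, hj2⟩ (by omega)
      have hci := hc i hi
      rcases lt_trichotomy (S i).1 (S' i).1 with h | h | h
      · exact (rsyt_aux hτ hS hS' hi hIH hci h).elim
      · have h2 : (S i).2 = (S' i).2 := by unfold content at hci; omega
        exact Prod.ext h h2
      · have hIH' : ∀ j ∈ Set.Icc 1 N, i < j → S' j = S j :=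
          fun j hj hij => (hIH j hj hij).symm
        exact (rsyt_aux hτ hS' hS hi hIH' hci.symm h).elim
  intro i hi
  obtain ⟨hi1, hi2⟩ := hi
  exact main (N - i) i ⟨hi1, hi2⟩ (by omega)
end

section
/- If S is an RSYT of shape τ with c(i,S) - c(i+1,S) ≥ 2 (i.e., row(i,S) < row(i+1,S) and col(i,S) > col(i+1,S)), then the tableau S^{(i)} obtained by exchanging the entries i and i+1 is again a reverse standard Young tableau of shape τ, and inv(S^{(i)}) = inv(S) - 1. -/
/-- The inversion number of a tableau. -/
noncomputable def invT (N : ℕ) (S : ℕ → ℕ × ℕ) : ℕ :=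
  (((Finset.Icc 1 N) ×ˢ (Finset.Icc 1 N)).filter
    (fun p => p.1 < p.2 ∧ content S p.2 + 2 ≤ content S p.1)).card

/-- If `c(i,S) - c(i+1,S) ≥ 2` then exchanging the entries `i` and `i+1` yields
an RSYT, with inversion number one less. -/
theorem rsyt_swap (τ : ℕ → ℕ) (hτ : Antitone τ) (N : ℕ)
    (S : ℕ → ℕ × ℕ) (hS : IsRSYT τ N S) (i : ℕ) (h1 : 1 ≤ i) (h2 : i < N)
    (hc : 2 ≤ content S i - content S (i + 1)) :
    IsRSYT τ N (S ∘ Equiv.swap i (i + 1)) ∧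
      invT N (S ∘ Equiv.swap i (i + 1)) = invT N S - 1 := by
  classical
  obtain ⟨hbij, hrow, hcol⟩ := hS
  have hiI : i ∈ Set.Icc 1 N := ⟨h1, h2.le⟩
  have hi1I : i + 1 ∈ Set.Icc 1 N := ⟨by omega, by omega⟩
  set σ : Equiv.Perm ℕ := Equiv.swap i (i + 1) with hσdef
  have hσapp : ∀ a, σ a = if a = i then i + 1 else if a = i + 1 then i else a := by
    intro a; rw [hσdef, Equiv.swap_apply_def]
  have eσi : σ i = i + 1 := by rw [hσapp]; simp
  have eσi1 : σ (i + 1) = i := by rw [hσapp]; simp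
  have hσσ : ∀ a, σ (σ a) = a := by
    intro a
    simp only [hσapp]
    split_ifs <;> omega
  have hσmem : ∀ a, a ∈ Set.Icc 1 N → σ a ∈ Set.Icc 1 N := by
    intro a ha
    rw [Set.mem_Icc] at *
    rw [hσapp]; split_ifs <;> omega
  have hσlt : ∀ a b : ℕ, a < b → ¬(a = i ∧ b = i + 1) → σ a < σ b := by
    intro a b hab h
    rw [hσapp, hσapp]
    split_ifs <;> omega
  have hcont : ∀ a, content (S ∘ σ) a = content S (σ a) := fun _ => rfl
  have hSi : (S i).2 < τ (S i).1 := hbij.mapsTo hiI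
  have hSi1 : (S (i + 1)).2 < τ (S (i + 1)).1 := hbij.mapsTo hi1I
  -- the entries i and i+1 lie in different rows
  have hrne : (S i).1 ≠ (S (i + 1)).1 := by
    intro h
    have hcc : (S (i + 1)).2 + 2 ≤ (S i).2 := by
      simp only [content] at hc; omega
    have hcell : ((S i).1, (S (i + 1)).2 + 1) ∈ {p : ℕ × ℕ | p.2 < τ p.1} :=
      Set.mem_setOf_eq ▸ lt_trans (by omega : (S (i+1)).2 + 1 < (S i).2) hSi
    obtain ⟨k, hk, hSk⟩ := hbij.surjOn hcell
    have hk1 : (S k).1 = (S i).1 := by rw [hSk]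
    have hk2 : (S k).2 = (S (i + 1)).2 + 1 := by rw [hSk]
    have h1k : i < k := hrow k hk i hiI hk1 (by omega)
    have h2k : k < i + 1 := hrow (i + 1) hi1I k hk (by rw [hk1]; exact h.symm) (by omega)
    omega
  -- the entries i and i+1 lie in different columns
  have hcne : (S i).2 ≠ (S (i + 1)).2 := by
    intro h
    have hrr : (S i).1 + 2 ≤ (S (i + 1)).1 := by
      simp only [content] at hc; omega
    have hcell : ((S i).1 + 1, (S i).2) ∈ {p : ℕ × ℕ | p.2 < τ p.1} := by
      have hτ' : τ ((S (i + 1)).1) ≤ τ ((S i).1 + 1) := hτ (by omega)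
      have : (S i).2 < τ ((S (i + 1)).1) := h ▸ hSi1
      exact Set.mem_setOf_eq ▸ lt_of_lt_of_le this hτ'
    obtain ⟨k, hk, hSk⟩ := hbij.surjOn hcell
    have hk1 : (S k).1 = (S i).1 + 1 := by rw [hSk]
    have hk2 : (S k).2 = (S i).2 := by rw [hSk]
    have h1k : k < i := hcol i hiI k hk hk2.symm (by omega)
    have h2k : i + 1 < k := hcol k hk (i + 1) hi1I (by rw [hk2]; exact h) (by omega)
    omega
  -- the swapped tableau is an RSYT
  have hbij' : Set.BijOn (S ∘ σ) (Set.Icc 1 N) {p : ℕ × ℕ | p.2 < τ p.1} := by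
    apply hbij.comp
    exact ⟨hσmem, σ.injective.injOn, fun x hx => ⟨σ x, hσmem x hx, hσσ x⟩⟩
  have hrow' : ∀ a ∈ Set.Icc 1 N, ∀ b ∈ Set.Icc 1 N,
      ((S ∘ σ) a).1 = ((S ∘ σ) b).1 → ((S ∘ σ) a).2 < ((S ∘ σ) b).2 → b < a := by
    intro a ha b hb he hl
    have h0 : σ b < σ a := hrow (σ a) (hσmem a ha) (σ b) (hσmem b hb) he hl
    by_contra hba
    have hab : a < b := by
      have : a ≠ b := fun hh => by rw [hh] at h0; exact lt_irrefl _ h0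
      omega
    by_cases hcase : a = i ∧ b = i + 1
    · obtain ⟨ha', hb'⟩ := hcase
      subst ha'; subst hb'
      simp only [Function.comp_apply, eσi, eσi1] at he
      exact hrne he.symm
    · exact absurd (hσlt a b hab hcase) (by omega)
  have hcol' : ∀ a ∈ Set.Icc 1 N, ∀ b ∈ Set.Icc 1 N,
      ((S ∘ σ) a).2 = ((S ∘ σ) b).2 → ((S ∘ σ) a).1 < ((S ∘ σ) b).1 → b < a := by
    intro a ha b hb he hl
    have h0 : σ b < σ a := hcol (σ a) (hσmem a ha) (σ b) (hσmem b hb) he hl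
    by_contra hba
    have hab : a < b := by
      have : a ≠ b := fun hh => by rw [hh] at h0; exact lt_irrefl _ h0
      omega
    by_cases hcase : a = i ∧ b = i + 1
    · obtain ⟨ha', hb'⟩ := hcase
      subst ha'; subst hb'
      simp only [Function.comp_apply, eσi, eσi1] at he
      exact hcne he.symm
    · exact absurd (hσlt a b hab hcase) (by omega)
  refine ⟨⟨hbij', hrow', hcol'⟩, ?_⟩
  -- the inversion count
  set f : ℕ × ℕ → ℕ × ℕ := fun p => (σ p.1, σ p.2) with hf
  have hff : ∀ p, f (f p) = p := by
    intro p; simp only [hf, hσσ]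
  have hfinj : Function.Injective f := Function.Involutive.injective hff
  have hcI : content S (i + 1) + 2 ≤ content S i := by omega
  have hmemA : (i, i + 1) ∈ (((Finset.Icc 1 N) ×ˢ (Finset.Icc 1 N)).filter
      (fun p => p.1 < p.2 ∧ content S p.2 + 2 ≤ content S p.1)) := by
    rw [Finset.mem_filter]
    refine ⟨?_, by omega, hcI⟩
    rw [Finset.mem_product, Finset.mem_Icc, Finset.mem_Icc]
    omega
  have hAA : (((Finset.Icc 1 N) ×ˢ (Finset.Icc 1 N)).filter
      (fun p => p.1 < p.2 ∧ content S p.2 + 2 ≤ content S p.1)).erase (i, i + 1)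
      = (((Finset.Icc 1 N) ×ˢ (Finset.Icc 1 N)).filter
      (fun p => p.1 < p.2 ∧ content (S ∘ σ) p.2 + 2 ≤ content (S ∘ σ) p.1)).image f := by
    ext ⟨a, b⟩
    simp only [Finset.mem_erase, Finset.mem_filter, Finset.mem_product, Finset.mem_Icc,
      Finset.mem_image, hf, Prod.mk.injEq, hcont, ne_eq, not_and]
    constructor
    · rintro ⟨hne, ⟨⟨ha, hb⟩, hab, hcnt⟩⟩
      refine ⟨(σ a, σ b), ⟨⟨?_, ?_⟩, ?_, ?_⟩, ?_⟩
      · exact Set.mem_Icc.mp (hσmem a (Set.mem_Icc.mpr ha))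
      · exact Set.mem_Icc.mp (hσmem b (Set.mem_Icc.mpr hb))
      · exact hσlt a b hab (fun ⟨e1, e2⟩ => hne e1 e2)
      · show content S (σ (σ b)) + 2 ≤ content S (σ (σ a))
        rw [hσσ, hσσ]; exact hcnt
      · exact ⟨hσσ a, hσσ b⟩
    · rintro ⟨⟨x, y⟩, ⟨⟨hx, hy⟩, hxy, hcnt⟩, hfa, hfb⟩
      have hnot : ¬(x = i ∧ y = i + 1) := by
        rintro ⟨rfl, rfl⟩
        rw [eσi, eσi1] at hcnt
        omega
      have hab : σ x < σ y := hσlt x y hxy hnot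
      subst hfa; subst hfb
      refine ⟨?_, ⟨?_, ?_⟩, hab, hcnt⟩
      · intro hai hbi
        have ex : x = i + 1 := by
          have := congrArg σ hai; rw [hσσ, eσi] at this; exact this
        have ey : y = i := by
          have := congrArg σ hbi; rw [hσσ, eσi1] at this; exact this
        omega
      · exact Set.mem_Icc.mp (hσmem x (Set.mem_Icc.mpr hx))
      · exact Set.mem_Icc.mp (hσmem y (Set.mem_Icc.mpr hy))
  unfold invT
  rw [← Finset.card_image_of_injective _ hfinj, ← hAA, Finset.card_erase_of_mem hmemA]
end

section
/- For α ∈ ℕ₀^N with α_i < α_{i+1}, the ratio of the products E(α)/E(α.s_i) equals u(q^{α_{i+1} - α_i} t^{r_α(i) - r_α(i+1)}), where E(α) := ∏_{1 ≤ i < j ≤ N, α_i < α_j} u(q^{α_j - α_i} t^{r_α(i) - r_α(j)}), u(z) = (t - z)(1 - tz)/(1-z)^2, and r_α is the rank function. -/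
/-- Rank function of a composition (entries indexed `1,…,N`). -/
noncomputable def rankFn (N : ℕ) (α : ℕ → ℕ) (i : ℕ) : ℕ :=
  ((Finset.Icc 1 N).filter (fun j => α j > α i)).card
    + ((Finset.Icc 1 i).filter (fun j => α j = α i)).card

noncomputable def uFn {K : Type*} [Field K] (t z : K) : K :=
  (t - z) * (1 - t * z) / (1 - z) ^ 2

/-- `E(α) = ∏_{i<j, α_i<α_j} u(q^{α_j-α_i} t^{r_α(i)-r_α(j)})`. -/
noncomputable def EFn {K : Type*} [Field K] (q t : K) (N : ℕ) (α : ℕ → ℕ) : K :=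
  ∏ p ∈ ((Finset.Icc 1 N) ×ˢ (Finset.Icc 1 N)).filter
      (fun p => p.1 < p.2 ∧ α p.1 < α p.2),
    uFn t (q ^ (α p.2 - α p.1) * t ^ ((rankFn N α p.1 : ℤ) - rankFn N α p.2))

open Finset

section Aux

variable {i : ℕ}

private lemma swap_eq (i a : ℕ) :
    Equiv.swap i (i+1) a = if a = i then i+1 else if a = i+1 then i else a := by
  rw [Equiv.swap_apply_def]

private lemma swap_swap (i a : ℕ) :
    Equiv.swap i (i+1) (Equiv.swap i (i+1) a) = a :=
  Equiv.swap_apply_self _ _ _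

private lemma swap_lt {a b : ℕ} (hab : a < b) (hne : ¬(a = i ∧ b = i+1)) :
    Equiv.swap i (i+1) a < Equiv.swap i (i+1) b := by
  simp only [swap_eq]; split_ifs <;> omega

private lemma swap_le {a b : ℕ} (hab : a ≤ b) (hne : ¬(a = i ∧ b = i+1)) :
    Equiv.swap i (i+1) a ≤ Equiv.swap i (i+1) b := by
  simp only [swap_eq]; split_ifs <;> omega

private lemma swap_pos (h1 : 1 ≤ i) {a : ℕ} (ha : 1 ≤ a) :
    1 ≤ Equiv.swap i (i+1) a := by
  rw [swap_eq]; split_ifs <;> omega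

private lemma swap_mem_Icc {N a : ℕ} (h1 : 1 ≤ i) (h2 : i < N) (ha : a ∈ Icc 1 N) :
    Equiv.swap i (i+1) a ∈ Icc 1 N := by
  simp only [mem_Icc] at *; rw [swap_eq]; split_ifs <;> omega

private lemma rank_swap {N : ℕ} {α : ℕ → ℕ} (h1 : 1 ≤ i) (h2 : i < N)
    (hα : α i ≠ α (i+1)) (j : ℕ) :
    rankFn N (α ∘ Equiv.swap i (i+1)) j = rankFn N α (Equiv.swap i (i+1) j) := by
  unfold rankFn
  congr 1
  · apply card_nbij' (fun k => Equiv.swap i (i+1) k) (fun k => Equiv.swap i (i+1) k)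
    · intro k hk
      simp only [mem_coe, mem_filter, Function.comp_apply] at *
      exact ⟨swap_mem_Icc h1 h2 hk.1, hk.2⟩
    · intro k hk
      simp only [mem_coe, mem_filter, Function.comp_apply] at *
      refine ⟨swap_mem_Icc h1 h2 hk.1, ?_⟩
      rw [swap_swap]; exact hk.2
    · intro k _; exact swap_swap i k
    · intro k _; exact swap_swap i k
  · apply card_nbij' (fun k => Equiv.swap i (i+1) k) (fun k => Equiv.swap i (i+1) k)
    · intro k hk
      simp only [mem_coe, mem_Icc, mem_filter, Function.comp_apply] at *
      obtain ⟨⟨hk1, hk2⟩, hk3⟩ := hk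
      have hne : ¬(k = i ∧ j = i+1) := by
        rintro ⟨e1, e2⟩
        rw [e1, e2, Equiv.swap_apply_left, Equiv.swap_apply_right] at hk3
        exact hα hk3.symm
      exact ⟨⟨swap_pos h1 hk1, swap_le hk2 hne⟩, hk3⟩
    · intro m hm
      simp only [mem_coe, mem_Icc, mem_filter, Function.comp_apply] at *
      obtain ⟨⟨hm1, hm2⟩, hm3⟩ := hm
      have hne : ¬(m = i ∧ Equiv.swap i (i+1) j = i+1) := by
        rintro ⟨e1, e2⟩
        have hj : j = i := by rw [swap_eq] at e2; split_ifs at e2 <;> omega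
        rw [e1, hj, Equiv.swap_apply_left] at hm3
        exact hα hm3
      have hle := swap_le hm2 hne
      rw [swap_swap] at hle
      refine ⟨⟨swap_pos h1 hm1, hle⟩, ?_⟩
      rw [swap_swap]; exact hm3
    · intro k _; exact swap_swap i k
    · intro k _; exact swap_swap i k

end Aux

/-- If `α_i < α_{i+1}` then `E(α) = u(q^{α_{i+1}-α_i} t^{r_α(i)-r_α(i+1)}) · E(α.s_i)`. -/
theorem E_ratio (K : Type*) [Field K] (q t : K) (ht : t ≠ 0)
    (hgen : ∀ (a : ℕ) (b : ℤ), 1 ≤ a → q ^ a * t ^ b ≠ 1)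
    (N : ℕ) (α : ℕ → ℕ) (i : ℕ) (h1 : 1 ≤ i) (h2 : i < N) (hα : α i < α (i + 1)) :
    EFn q t N α
      = uFn t (q ^ (α (i + 1) - α i) * t ^ ((rankFn N α i : ℤ) - rankFn N α (i + 1)))
        * EFn q t N (α ∘ Equiv.swap i (i + 1)) := by
  classical
  have hαne : α i ≠ α (i+1) := Nat.ne_of_lt hα
  have hβs : ∀ a, (α ∘ Equiv.swap i (i+1)) (Equiv.swap i (i+1) a) = α a := by
    intro a; simp only [Function.comp_apply, swap_swap]
  have hmem : (i, i+1) ∈ ((Finset.Icc 1 N) ×ˢ (Finset.Icc 1 N)).filter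
      (fun p : ℕ × ℕ => p.1 < p.2 ∧ α p.1 < α p.2) := by
    simp only [mem_filter, mem_product, mem_Icc]
    exact ⟨⟨⟨h1, by omega⟩, ⟨by omega, by omega⟩⟩, by omega, hα⟩
  rw [EFn, ← Finset.mul_prod_erase _ _ hmem]
  congr 1
  rw [EFn]
  apply Finset.prod_nbij' (fun p : ℕ × ℕ => (Equiv.swap i (i+1) p.1, Equiv.swap i (i+1) p.2))
    (fun p : ℕ × ℕ => (Equiv.swap i (i+1) p.1, Equiv.swap i (i+1) p.2))
  · intro p hp
    simp only [mem_erase, mem_filter, mem_product, Function.comp_apply] at hp ⊢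
    obtain ⟨hpne, ⟨hp1, hp2⟩, hlt, hαlt⟩ := hp
    have hne : ¬(p.1 = i ∧ p.2 = i+1) := by
      rintro ⟨e1, e2⟩; exact hpne (Prod.ext e1 e2)
    refine ⟨⟨swap_mem_Icc h1 h2 hp1, swap_mem_Icc h1 h2 hp2⟩, swap_lt hlt hne, ?_⟩
    rw [swap_swap, swap_swap]; exact hαlt
  · intro p hp
    simp only [mem_erase, mem_filter, mem_product, Function.comp_apply] at hp ⊢
    obtain ⟨⟨hp1, hp2⟩, hlt, hβlt⟩ := hp
    have hne : ¬(p.1 = i ∧ p.2 = i+1) := by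
      rintro ⟨e1, e2⟩
      rw [e1, e2, Equiv.swap_apply_left, Equiv.swap_apply_right] at hβlt
      omega
    refine ⟨?_, ⟨swap_mem_Icc h1 h2 hp1, swap_mem_Icc h1 h2 hp2⟩, swap_lt hlt hne, hβlt⟩
    intro he
    rw [Prod.mk.injEq] at he
    obtain ⟨e1, e2⟩ := he
    rw [swap_eq] at e1 e2
    split_ifs at e1 e2 <;> omega
  · intro p _
    simp only [swap_swap]
  · intro p _
    simp only [swap_swap]
  · intro p hp
    rw [Function.comp_apply, Function.comp_apply, swap_swap, swap_swap,
      rank_swap h1 h2 hαne, rank_swap h1 h2 hαne, swap_swap, swap_swap]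
end

section
/- Let λ ∈ ℕ₀^N be a partition with λ_m ≥ 1 and λ_i = 0 for i > m, and set α = (λ_1,…,λ_{m-1},0,…,0,λ_m) (the λ_m moved to position N). Then E(α) = ∏_{i=m+1}^{N} u(q^{λ_m} t^{i-m}) = t^{N-m} · (1 - q^{λ_m})(1 - q^{λ_m} t^{N-m+1}) / ((1 - q^{λ_m} t)(1 - q^{λ_m} t^{N-m})). -/
lemma tele {K : Type*} [Field K] (t x : K)
    (hx : ∀ b : ℕ, x * t ^ b ≠ 1) (n : ℕ) :
    ∏ k ∈ Finset.range n, uFn t (x * t ^ (k + 1))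
      = t ^ n * ((1 - x) * (1 - x * t ^ (n + 1)))
        / ((1 - x * t) * (1 - x * t ^ n)) := by
  have hne : ∀ b : ℕ, (1 : K) - x * t ^ b ≠ 0 := fun b =>
    sub_ne_zero.mpr (Ne.symm (hx b))
  induction n with
  | zero =>
    have h0 := hne 0
    have h1 := hne 1
    rw [pow_zero, mul_one] at h0
    rw [pow_one] at h1
    simp only [Finset.range_zero, Finset.prod_empty, pow_zero, pow_one, one_mul]
    field_simp
    ring
  | succ n ih =>
    have h0 := hne 0; have h1 := hne 1
    have hn := hne n; have hn1 := hne (n+1); have hn2 := hne (n+2)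
    rw [pow_zero, mul_one] at h0
    rw [pow_one] at h1
    have hn' : 1 - t ^ n * x ≠ 0 := by rwa [mul_comm] at hn
    have hn1' : 1 - t ^ (n+1) * x ≠ 0 := by rwa [mul_comm] at hn1
    have hn2' : 1 - t ^ (n+2) * x ≠ 0 := by rwa [mul_comm] at hn2
    have h1' : 1 - t * x ≠ 0 := by rwa [mul_comm] at h1
    rw [Finset.prod_range_succ, ih, uFn]
    field_simp
    ring

/-- For a partition `λ` with last nonzero part `λ_m` and
`α = (λ_1,…,λ_{m-1},0,…,0,λ_m)`, the product `E(α)` telescopes. -/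
theorem E_alpha_telescope (K : Type*) [Field K] (q t : K) (ht : t ≠ 0)
    (hgen : ∀ (a : ℕ) (b : ℤ), 1 ≤ a → q ^ a * t ^ b ≠ 1)
    (N m : ℕ) (h1 : 1 ≤ m) (h2 : m ≤ N) (l : ℕ → ℕ)
    (hdec : ∀ i j : ℕ, 1 ≤ i → i ≤ j → j ≤ N → l j ≤ l i)
    (hm : 1 ≤ l m) (hzero : ∀ i : ℕ, m < i → l i = 0)
    (α : ℕ → ℕ)
    (hα : ∀ i : ℕ, α i = if i < m then l i else if i = N then l m else 0) :
    EFn q t N α = (∏ i ∈ Finset.Icc (m + 1) N, uFn t (q ^ l m * t ^ (i - m))) ∧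
    EFn q t N α = t ^ (N - m) * ((1 - q ^ l m) * (1 - q ^ l m * t ^ (N - m + 1)))
        / ((1 - q ^ l m * t) * (1 - q ^ l m * t ^ (N - m))) := by
  -- basic value facts
  have hα0 : ∀ i, m ≤ i → i < N → α i = 0 := by
    intro i hi1 hi2
    rw [hα, if_neg (by omega), if_neg (by omega)]
  have hαN : α N = l m := by
    rw [hα, if_neg (by omega), if_pos rfl]
  have hαlt : ∀ i, i < m → α i = l i := by
    intro i hi; rw [hα, if_pos hi]
  have hlge : ∀ i, 1 ≤ i → i < m → l m ≤ α i := by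
    intro i hi1 hi2
    rw [hαlt i hi2]
    exact hdec i m hi1 (by omega) h2
  -- rank at N
  have hset2 : ((Finset.Icc 1 N).filter (fun j => α j > α N)) ∪
      ((Finset.Icc 1 N).filter (fun j => α j = α N))
      = insert N (Finset.Icc 1 (m - 1)) := by
    rw [← Finset.filter_or]
    ext j
    simp only [Finset.mem_filter, Finset.mem_Icc, Finset.mem_insert]
    constructor
    · rintro ⟨⟨hj1, hj2⟩, hj3⟩
      have hj3' : l m ≤ α j := by rw [hαN] at hj3; omega
      by_cases hjm : j < m
      · right; omega
      · by_cases hjN : j = N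
        · left; exact hjN
        · rw [hα, if_neg hjm, if_neg hjN] at hj3'; omega
    · rintro (rfl | ⟨hj1, hj2⟩)
      · exact ⟨⟨by omega, le_refl _⟩, Or.inr rfl⟩
      · refine ⟨⟨hj1, by omega⟩, ?_⟩
        have := hlge j hj1 (by omega)
        rw [hαN]; omega
  have hdisj : Disjoint ((Finset.Icc 1 N).filter (fun j => α j > α N))
      ((Finset.Icc 1 N).filter (fun j => α j = α N)) := by
    rw [Finset.disjoint_left]
    intro a ha hb
    simp only [Finset.mem_filter] at ha hb
    omega
  have hrN : rankFn N α N = m := by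
    rw [rankFn, ← Finset.card_union_of_disjoint hdisj, hset2,
      Finset.card_insert_of_notMem (by simp [Finset.mem_Icc]; omega),
      Nat.card_Icc]
    omega
  -- rank at i for m ≤ i < N
  have hri : ∀ i, m ≤ i → i < N → rankFn N α i = i + 1 := by
    intro i hi1 hi2
    have hαi : α i = 0 := hα0 i hi1 hi2
    have hs1 : ((Finset.Icc 1 N).filter (fun j => α j > α i))
        = insert N (Finset.Icc 1 (m - 1)) := by
      ext j
      simp only [Finset.mem_filter, Finset.mem_Icc, Finset.mem_insert, hαi, gt_iff_lt]
      constructor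
      · rintro ⟨⟨hj1, hj2⟩, hj3⟩
        by_cases hjm : j < m
        · right; omega
        · by_cases hjN : j = N
          · left; exact hjN
          · rw [hα, if_neg hjm, if_neg hjN] at hj3; omega
      · rintro (rfl | ⟨hj1, hj2⟩)
        · refine ⟨⟨by omega, le_refl _⟩, ?_⟩
          rw [hαN]; omega
        · refine ⟨⟨hj1, by omega⟩, ?_⟩
          have := hlge j hj1 (by omega)
          omega
    have hs2 : ((Finset.Icc 1 i).filter (fun j => α j = α i))
        = Finset.Icc m i := by
      ext j
      simp only [Finset.mem_filter, Finset.mem_Icc, hαi]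
      constructor
      · rintro ⟨⟨hj1, hj2⟩, hj3⟩
        by_cases hjm : j < m
        · have := hlge j hj1 hjm; omega
        · exact ⟨by omega, hj2⟩
      · rintro ⟨hj1, hj2⟩
        exact ⟨⟨by omega, hj2⟩, hα0 j hj1 (by omega)⟩
    rw [rankFn, hs1, hs2,
      Finset.card_insert_of_notMem (by simp [Finset.mem_Icc]; omega),
      Nat.card_Icc, Nat.card_Icc]
    omega
  -- the index set
  have hSet : (((Finset.Icc 1 N) ×ˢ (Finset.Icc 1 N)).filter
      (fun p => p.1 < p.2 ∧ α p.1 < α p.2))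
      = (Finset.range (N - m)).image (fun k => (m + k, N)) := by
    ext ⟨i, j⟩
    simp only [Finset.mem_filter, Finset.mem_product, Finset.mem_Icc,
      Finset.mem_image, Finset.mem_range, Prod.mk.injEq]
    constructor
    · rintro ⟨⟨⟨hi1, hi2⟩, hj1, hj2⟩, hij, hαij⟩
      have hjN : j = N := by
        by_contra hjN
        rcases lt_or_ge j m with h | h
        · have him : i < m := by omega
          rw [hαlt i him, hαlt j h] at hαij
          have := hdec i j hi1 (by omega) (by omega)
          omega
        · rw [hα j, if_neg (by omega), if_neg hjN] at hαij; omega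
      subst hjN
      have him : m ≤ i := by
        by_contra h
        push_neg at h
        have := hlge i hi1 h
        rw [hαN] at hαij
        omega
      exact ⟨i - m, by omega, by omega, rfl⟩
    · rintro ⟨k, hk, rfl, rfl⟩
      refine ⟨⟨⟨by omega, by omega⟩, by omega, le_refl _⟩, by omega, ?_⟩
      rw [hα0 (m + k) (by omega) (by omega), hαN]
      omega
  have hinj : ∀ x ∈ Finset.range (N - m), ∀ y ∈ Finset.range (N - m),
      (fun k => ((m + k, N) : ℕ × ℕ)) x = (fun k => ((m + k, N) : ℕ × ℕ)) y → x = y := by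
    intro x _ y _ h
    simp only [Prod.mk.injEq] at h
    omega
  have hx : ∀ b : ℕ, q ^ l m * t ^ b ≠ 1 := by
    intro b
    have := hgen (l m) (b : ℤ) hm
    rwa [zpow_natCast] at this
  have hE : EFn q t N α = ∏ k ∈ Finset.range (N - m), uFn t (q ^ l m * t ^ (k + 1)) := by
    rw [EFn, hSet, Finset.prod_image hinj]
    refine Finset.prod_congr rfl fun k hk => ?_
    simp only [Finset.mem_range] at hk
    rw [hα0 (m + k) (by omega) (by omega), hαN, hri (m + k) (by omega) (by omega), hrN,
      Nat.sub_zero]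
    congr 1
    rw [show ((↑(m + k + 1) : ℤ) - ↑m) = ((k + 1 : ℕ) : ℤ) by push_cast; ring,
      zpow_natCast]
  have hP : (∏ i ∈ Finset.Icc (m + 1) N, uFn t (q ^ l m * t ^ (i - m)))
      = ∏ k ∈ Finset.range (N - m), uFn t (q ^ l m * t ^ (k + 1)) := by
    refine (Finset.prod_bij (fun k _ => m + k + 1) ?_ ?_ ?_ ?_).symm
    · intro k hk; simp only [Finset.mem_range] at hk
      simp only [Finset.mem_Icc]; omega
    · intro x hx' y hy' h; omega
    · intro i hi
      simp only [Finset.mem_Icc] at hi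
      exact ⟨i - m - 1, by simp only [Finset.mem_range]; omega, by omega⟩
    · intro k hk
      simp only [Finset.mem_range] at hk
      show uFn t (q ^ l m * t ^ (k + 1)) = uFn t (q ^ l m * t ^ (m + k + 1 - m))
      rw [show m + k + 1 - m = k + 1 from by omega]
  constructor
  · rw [hE, ← hP]
  · rw [hE, tele t (q ^ l m) hx (N - m)]
end
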